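/- Let Q be a Markov transition kernel on a measurable space X with density q with respect to a probability measure λ satisfying 0 < σ⁻ ≤ q(x, x') for all x, x'. Then Q admits a unique invariant probability measure π, and for every x ∈ X and n ∈ ℕ, ‖Qⁿ(x, ·) - π‖_TV ≤ (1 - σ⁻)ⁿ. -/

import Mathlib

open MeasureTheory ProbabilityTheory
open scoped ENNReal

section DoeblinAux

variable {X : Type*} [MeasurableSpace X]

lemma doeblin_bind_smul (μ : Measure X) (κ : Kernel X X) (c : ℝ≥0∞) :
    (c • μ).bind (fun x => κ x) = c • μ.bind (fun x => κ x) := by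
  ext A hA
  simp only [Measure.bind_apply hA (Kernel.measurable κ).aemeasurable, Measure.smul_apply,
    lintegral_smul_measure, smul_eq_mul]

lemma doeblin_bind_add (μ ν : Measure X) (κ : Kernel X X) :
    (μ + ν).bind (fun x => κ x) = μ.bind (fun x => κ x) + ν.bind (fun x => κ x) := by
  ext A hA
  rw [Measure.bind_apply hA (Kernel.measurable κ).aemeasurable, lintegral_add_measure, Measure.add_apply,
    Measure.bind_apply hA (Kernel.measurable κ).aemeasurable, Measure.bind_apply hA (Kernel.measurable κ).aemeasurable]

lemma doeblin_bind_sum (μs : ℕ → Measure X) (κ : Kernel X X) :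
    (Measure.sum μs).bind (fun x => κ x)
      = Measure.sum (fun k => (μs k).bind (fun x => κ x)) := by
  ext A hA
  rw [Measure.bind_apply hA (Kernel.measurable κ).aemeasurable, lintegral_sum_measure,
    Measure.sum_apply _ hA]
  exact tsum_congr fun k => (Measure.bind_apply hA (Kernel.measurable κ).aemeasurable).symm

lemma doeblin_bind_finset_sum (n : ℕ) (μs : ℕ → Measure X) (κ : Kernel X X) :
    (∑ k ∈ Finset.range n, μs k).bind (fun x => κ x)
      = ∑ k ∈ Finset.range n, (μs k).bind (fun x => κ x) := by
  induction n with
  | zero => simp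
  | succ n ih =>
    rw [Finset.sum_range_succ, Finset.sum_range_succ, doeblin_bind_add, ih]

lemma doeblin_bind_mass (μ : Measure X) (κ : Kernel X X) (c : ℝ≥0∞)
    (hκ : ∀ x, κ x Set.univ = c) :
    (μ.bind fun x => κ x) Set.univ = c * μ Set.univ := by
  rw [Measure.bind_apply MeasurableSet.univ (Kernel.measurable κ).aemeasurable]
  simp_rw [hκ]
  rw [lintegral_const]

lemma doeblin_isProbability_bind (μ : Measure X) [IsProbabilityMeasure μ]
    (κ : Kernel X X) [IsMarkovKernel κ] :
    IsProbabilityMeasure (μ.bind fun x => κ x) := by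
  constructor
  rw [doeblin_bind_mass μ κ 1 (fun x => measure_univ), measure_univ, mul_one]

end DoeblinAux

/-- Total variation distance between two measures. -/
noncomputable def tvDist {X : Type*} [MeasurableSpace X] (μ ν : Measure X) : ℝ :=
  ⨆ A : {s : Set X // MeasurableSet s}, |(μ A.1).toReal - (ν A.1).toReal|

/-- `kernelIterate Q n μ` is the distribution obtained from `μ` after `n` steps of the
Markov kernel `Q`; in particular `kernelIterate Q n (dirac x) = Qⁿ(x, ·)`. -/
noncomputable def kernelIterate {X : Type*} [MeasurableSpace X] (Q : Kernel X X) :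
    ℕ → Measure X → Measure X
  | 0, μ => μ
  | n + 1, μ => (kernelIterate Q n μ).bind (fun x => Q x)


/-- If a Markov kernel `Q` admits a density `q ≥ σ⁻ > 0` with respect to a probability
measure `lam`, then `Q` has a unique invariant probability measure `π` and is uniformly
geometrically ergodic: `‖Qⁿ(x,·) - π‖_TV ≤ (1 - σ⁻)ⁿ`. -/
theorem unique_invariant_and_geometric_ergodicity {X : Type*} [MeasurableSpace X]
    (lam : Measure X) [IsProbabilityMeasure lam]
    (Q : Kernel X X) [IsMarkovKernel Q]
    (q : X → X → ℝ) (σm : ℝ) (hσm : 0 < σm)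
    (hq_meas : Measurable (Function.uncurry q))
    (hq_lb : ∀ x x', σm ≤ q x x')
    (hQ : ∀ x : X, ∀ A : Set X, MeasurableSet A →
      Q x A = ∫⁻ x' in A, ENNReal.ofReal (q x x') ∂lam) :
    ∃ π : Measure X, IsProbabilityMeasure π ∧ π.bind (fun x => Q x) = π ∧
      (∀ π' : Measure X, IsProbabilityMeasure π' → π'.bind (fun x => Q x) = π' → π' = π) ∧
      ∀ x : X, ∀ n : ℕ,
        tvDist (kernelIterate Q n (Measure.dirac x)) π ≤ (1 - σm) ^ n := by
  classical
  -- basic setup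
  have hXne : Nonempty X := by
    by_contra h
    rw [not_nonempty_iff] at h
    have h0 : lam Set.univ = 0 := by
      rw [Set.univ_eq_empty_iff.mpr h]; exact measure_empty
    rw [measure_univ] at h0; exact one_ne_zero h0
  obtain ⟨x₀⟩ := hXne
  set ε : ℝ≥0∞ := ENNReal.ofReal σm with hεdef
  have hε0 : ε ≠ 0 := (ENNReal.ofReal_pos.mpr hσm).ne'
  have hεtop : ε ≠ ⊤ := ENNReal.ofReal_ne_top
  have hqx_meas : ∀ x, Measurable fun y => ENNReal.ofReal (q x y) := fun x =>
    ENNReal.measurable_ofReal.comp (hq_meas.comp measurable_prodMk_left)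
  have hqint : ∀ x, ∫⁻ x', ENNReal.ofReal (q x x') ∂lam = 1 := by
    intro x
    have h := hQ x Set.univ MeasurableSet.univ
    rw [Measure.restrict_univ] at h
    rw [← h, measure_univ]
  have hεq : ∀ x y, ε ≤ ENNReal.ofReal (q x y) := fun x y =>
    ENNReal.ofReal_le_ofReal (hq_lb x y)
  have hε1 : ε ≤ 1 := by
    calc ε = ∫⁻ _, ε ∂lam := by rw [lintegral_const, measure_univ, mul_one]
    _ ≤ ∫⁻ y, ENNReal.ofReal (q x₀ y) ∂lam := lintegral_mono (hεq x₀)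
    _ = 1 := hqint x₀
  have hσ1 : σm ≤ 1 := ENNReal.ofReal_le_one.mp hε1
  set δ : ℝ≥0∞ := 1 - ε with hδdef
  have hδ1 : δ ≤ 1 := tsub_le_self
  have hδtop : δ ≠ ⊤ := (hδ1.trans_lt ENNReal.one_lt_top).ne
  have hδε : 1 - δ = ε := ENNReal.sub_sub_cancel ENNReal.one_ne_top hε1
  have hδofReal : δ = ENNReal.ofReal (1 - σm) := by
    rw [ENNReal.ofReal_sub 1 hσm.le, ENNReal.ofReal_one]
  have hδtoReal : δ.toReal = 1 - σm := by
    rw [hδofReal, ENNReal.toReal_ofReal (by linarith)]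
  -- the residual kernel R
  set f : X → X → ℝ≥0∞ := fun x y => ENNReal.ofReal (q x y) - ε with hfdef
  have hf_meas : Measurable (Function.uncurry f) := by
    show Measurable ((fun p => ENNReal.ofReal (Function.uncurry q p)) - fun _ => ε)
    apply Measurable.sub _ measurable_const
    exact ENNReal.measurable_ofReal.comp hq_meas
  set R : Kernel X X := Kernel.withDensity (Kernel.const X lam) f with hRdef
  have hR_apply : ∀ x (A : Set X), R x A = ∫⁻ y in A, f x y ∂lam := by
    intro x A
    rw [hRdef, Kernel.withDensity_apply' _ hf_meas, Kernel.const_apply]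
  have hdecomp : ∀ x (A : Set X), MeasurableSet A → Q x A = ε * lam A + R x A := by
    intro x A hA
    rw [hQ x A hA, hR_apply x A]
    have hpt : ∀ y, ENNReal.ofReal (q x y) = ε + f x y := by
      intro y; rw [hfdef, add_comm]; exact (tsub_add_cancel_of_le (hεq x y)).symm
    calc ∫⁻ y in A, ENNReal.ofReal (q x y) ∂lam = ∫⁻ y in A, (ε + f x y) ∂lam := by
          exact lintegral_congr hpt
    _ = ε * lam A + ∫⁻ y in A, f x y ∂lam := by
          rw [lintegral_add_left measurable_const, setLIntegral_const]
  have hR_univ : ∀ x, R x Set.univ = δ := by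
    intro x
    rw [hR_apply x Set.univ, Measure.restrict_univ, hfdef]
    rw [lintegral_sub measurable_const (by rw [lintegral_const, measure_univ, mul_one]; exact hεtop)
      (Filter.Eventually.of_forall (hεq x)), hqint x, lintegral_const, measure_univ, mul_one]
  -- bind decomposition
  have hbindQ : ∀ μ : Measure X,
      μ.bind (fun x => Q x) = (μ Set.univ * ε) • lam + μ.bind (fun x => R x) := by
    intro μ
    ext A hA
    rw [Measure.bind_apply hA (Kernel.measurable Q).aemeasurable]
    rw [lintegral_congr (fun x => hdecomp x A hA)]
    rw [lintegral_add_left measurable_const, lintegral_const, Measure.add_apply,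
      Measure.smul_apply, Measure.bind_apply hA (Kernel.measurable R).aemeasurable, smul_eq_mul]
    ring
  -- the measures ν k = lam R^k
  set ν : ℕ → Measure X := fun k => kernelIterate R k lam with hνdef
  have hν_univ : ∀ k, ν k Set.univ = δ ^ k := by
    intro k
    induction k with
    | zero => simp [hνdef, kernelIterate]
    | succ k ih =>
      have : ν (k + 1) = (ν k).bind (fun x => R x) := rfl
      rw [this, doeblin_bind_mass _ R δ hR_univ, ih, pow_succ, mul_comm]
  have hν_le : ∀ k (A : Set X), ν k A ≤ δ ^ k := fun k A =>
    (measure_mono (Set.subset_univ A)).trans_eq (hν_univ k)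
  -- the invariant measure
  set π : Measure X := ε • Measure.sum ν with hπdef
  have hπ_apply : ∀ A : Set X, MeasurableSet A → π A = ε * ∑' k, ν k A := by
    intro A hA
    rw [hπdef, Measure.smul_apply, Measure.sum_apply _ hA, smul_eq_mul]
  have htsum_geo : ∑' k, (δ : ℝ≥0∞) ^ k = ε⁻¹ := by
    rw [ENNReal.tsum_geometric, hδε]
  have hπ_prob : IsProbabilityMeasure π := by
    constructor
    rw [hπ_apply Set.univ MeasurableSet.univ]
    rw [tsum_congr hν_univ, htsum_geo, ENNReal.mul_inv_cancel hε0 hεtop]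
  -- invariance
  have hshift : ∀ k, (ν k).bind (fun x => R x) = ν (k + 1) := fun k => rfl
  have hπ_inv : π.bind (fun x => Q x) = π := by
    rw [hbindQ π, hπ_prob.measure_univ, one_mul]
    rw [hπdef, doeblin_bind_smul, doeblin_bind_sum]
    simp_rw [hshift]
    ext A hA
    rw [Measure.add_apply, Measure.smul_apply, Measure.smul_apply, Measure.smul_apply,
      Measure.sum_apply _ hA, Measure.sum_apply _ hA, smul_eq_mul, smul_eq_mul, smul_eq_mul]
    have hsplit : ∑' k, ν k A = ν 0 A + ∑' k, ν (k + 1) A :=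
      tsum_eq_zero_add' ENNReal.summable
    rw [hsplit, mul_add]
    rfl
  -- the key structural formula for iterates
  have hprob_iter : ∀ (μ : Measure X), IsProbabilityMeasure μ → ∀ n,
      IsProbabilityMeasure (kernelIterate Q n μ) := by
    intro μ hμ n
    induction n with
    | zero => exact hμ
    | succ n ih => exact @doeblin_isProbability_bind X _ (kernelIterate Q n μ) ih Q _
  have hRn_univ : ∀ (μ : Measure X) n, (kernelIterate R n μ) Set.univ = δ ^ n * μ Set.univ := by
    intro μ n
    induction n with
    | zero => simp [kernelIterate]
    | succ n ih =>
      have : kernelIterate R (n + 1) μ = (kernelIterate R n μ).bind (fun x => R x) := rfl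
      rw [this, doeblin_bind_mass _ R δ hR_univ, ih, pow_succ]; ring
  have hiter : ∀ (μ : Measure X), IsProbabilityMeasure μ → ∀ n,
      kernelIterate Q n μ
        = ε • (∑ k ∈ Finset.range n, ν k) + kernelIterate R n μ := by
    intro μ hμ n
    induction n with
    | zero => simp [kernelIterate]
    | succ n ih =>
      have h1 : kernelIterate Q (n + 1) μ = (kernelIterate Q n μ).bind (fun x => Q x) := rfl
      rw [h1, hbindQ, (hprob_iter μ hμ n).measure_univ, one_mul, ih,
        doeblin_bind_add, doeblin_bind_smul, doeblin_bind_finset_sum]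
      simp_rw [hshift]
      have h2 : kernelIterate R (n + 1) μ = (kernelIterate R n μ).bind (fun x => R x) := rfl
      rw [← h2]
      have h3 : ∑ k ∈ Finset.range (n + 1), ν k
          = (∑ k ∈ Finset.range n, ν (k + 1)) + ν 0 := by
        rw [Finset.sum_range_succ']
      rw [h3, smul_add]
      have : ν 0 = lam := rfl
      rw [this]
      abel
  -- the per-set bound
  have hboundA : ∀ (μ : Measure X), IsProbabilityMeasure μ → ∀ n (A : Set X), MeasurableSet A →
      |((kernelIterate Q n μ) A).toReal - (π A).toReal| ≤ (1 - σm) ^ n := by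
    intro μ hμ n A hA
    have h1 : (kernelIterate Q n μ) A
        = ε * (∑ k ∈ Finset.range n, ν k A) + (kernelIterate R n μ) A := by
      rw [hiter μ hμ n, Measure.add_apply, Measure.smul_apply, smul_eq_mul,
        Measure.finset_sum_apply]
    have h2 : π A = ε * (∑ k ∈ Finset.range n, ν k A) + ε * ∑' k, ν (k + n) A := by
      rw [hπ_apply A hA, ← mul_add]
      congr 1
      exact (Summable.sum_add_tsum_nat_add' (f := fun k => ν k A) (k := n) ENNReal.summable).symm
    set a : ℝ≥0∞ := ε * (∑ k ∈ Finset.range n, ν k A) with hadef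
    set b : ℝ≥0∞ := (kernelIterate R n μ) A with hbdef
    set c : ℝ≥0∞ := ε * ∑' k, ν (k + n) A with hcdef
    have hb : b ≤ δ ^ n := by
      rw [hbdef]
      calc (kernelIterate R n μ) A ≤ (kernelIterate R n μ) Set.univ :=
            measure_mono (Set.subset_univ A)
      _ = δ ^ n := by rw [hRn_univ, measure_univ, mul_one]
    have hc : c ≤ δ ^ n := by
      rw [hcdef]
      calc ε * ∑' k, ν (k + n) A ≤ ε * ∑' k, δ ^ (k + n) := by
            gcongr with k; exact hν_le (k + n) A
      _ = ε * (δ ^ n * ∑' k, δ ^ k) := by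
            congr 1
            simp_rw [pow_add]
            rw [ENNReal.tsum_mul_right, mul_comm]
      _ = δ ^ n * (ε * ε⁻¹) := by rw [htsum_geo]; ring
      _ = δ ^ n := by rw [ENNReal.mul_inv_cancel hε0 hεtop, mul_one]
    have hδn_top : (δ : ℝ≥0∞) ^ n ≠ ⊤ := (ENNReal.pow_ne_top hδtop)
    haveI := hπ_prob
    have ha_top : a ≠ ⊤ := by
      have hle : a ≤ π A := by rw [h2]; exact le_self_add
      exact (hle.trans_lt (measure_lt_top π A)).ne
    have hb_top : b ≠ ⊤ := (hb.trans_lt (hδn_top.lt_top)).ne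
    have hc_top : c ≠ ⊤ := (hc.trans_lt (hδn_top.lt_top)).ne
    rw [h1, h2, ENNReal.toReal_add ha_top hb_top, ENNReal.toReal_add ha_top hc_top]
    have hδn : (δ ^ n).toReal = (1 - σm) ^ n := by
      rw [ENNReal.toReal_pow, hδtoReal]
    have hbR : b.toReal ≤ (1 - σm) ^ n := by
      rw [← hδn]; exact ENNReal.toReal_mono hδn_top hb
    have hcR : c.toReal ≤ (1 - σm) ^ n := by
      rw [← hδn]; exact ENNReal.toReal_mono hδn_top hc
    have hb0 : 0 ≤ b.toReal := ENNReal.toReal_nonneg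
    have hc0 : 0 ≤ c.toReal := ENNReal.toReal_nonneg
    rw [abs_le]
    constructor <;> [linarith; linarith]
  refine ⟨π, hπ_prob, hπ_inv, ?_, ?_⟩
  · -- uniqueness
    intro π' hπ' hinv'
    have hiter' : ∀ n, kernelIterate Q n π' = π' := by
      intro n
      induction n with
      | zero => rfl
      | succ n ih =>
        have : kernelIterate Q (n + 1) π' = (kernelIterate Q n π').bind (fun x => Q x) := rfl
        rw [this, ih, hinv']
    ext A hA
    have hle : ∀ n : ℕ, |(π' A).toReal - (π A).toReal| ≤ (1 - σm) ^ n := by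
      intro n
      have := hboundA π' hπ' n A hA
      rwa [hiter' n] at this
    have htend : Filter.Tendsto (fun n : ℕ => (1 - σm) ^ n) Filter.atTop (nhds 0) :=
      tendsto_pow_atTop_nhds_zero_of_lt_one (by linarith) (by linarith)
    have h0 : |(π' A).toReal - (π A).toReal| ≤ 0 := ge_of_tendsto' htend hle
    have heq : (π' A).toReal = (π A).toReal := by
      have := abs_nonneg ((π' A).toReal - (π A).toReal)
      have habs : |(π' A).toReal - (π A).toReal| = 0 := le_antisymm h0 this
      have := abs_eq_zero.mp habs
      linarith
    exact (ENNReal.toReal_eq_toReal_iff' (measure_ne_top π' A) (measure_ne_top π A)).mp heq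
  · -- geometric ergodicity
    intro x n
    have hpos : (0 : ℝ) ≤ (1 - σm) ^ n := pow_nonneg (by linarith) n
    apply Real.iSup_le _ hpos
    rintro ⟨A, hA⟩
    exact hboundA (Measure.dirac x) (by infer_instance) n A hA
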